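/- For λ ≥ 2 and σ₁, σ₂ > 0 let φ(λ) = λσ₁/(λ-1) + λσ₂ and λ₀ = 1 + (σ₁/σ₂)^{1/2}. If λ₀ ≥ 20/11, then for all 2 ≤ λ ≤ 9λ₀/10: |φ'(λ)| ≥ σ₂λ₀/(10(λ-1)) and |φ''(λ)/φ'(λ)| ≤ 22/(λ-1). -/

import Mathlib

set_option maxHeartbeats 800000


/-- Nonstationary phase derivative bounds for `φ(λ) = λσ₁/(λ-1) + λσ₂` in the regime
`2 ≤ λ ≤ 9lam0/10` when `lam0 = 1 + (σ₁/σ₂)^{1/2} ≥ 20/11`: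
`|φ'(λ)| ≥ σ₂lam0/(10(λ-1))` and `|φ''(λ)/φ'(λ)| ≤ 22/(λ-1)`. -/
theorem phase_derivative_bounds (σ₁ σ₂ : ℝ) (h1 : 0 < σ₁) (h2 : 0 < σ₂)
    (φ : ℝ → ℝ) (hφ : φ = fun l => l * σ₁ / (l - 1) + l * σ₂)
    (lam0 : ℝ) (hlam0 : lam0 = 1 + Real.sqrt (σ₁ / σ₂)) (hge : 20 / 11 ≤ lam0)
    (l : ℝ) (hl2 : 2 ≤ l) (hl9 : l ≤ 9 * lam0 / 10) :
    σ₂ * lam0 / (10 * (l - 1)) ≤ |deriv φ l| ∧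
    |deriv (deriv φ) l / deriv φ l| ≤ 22 / (l - 1) := by
  set s := Real.sqrt (σ₁ / σ₂) with hsdef
  have hs0 : 0 < s := Real.sqrt_pos.mpr (div_pos h1 h2)
  have hs2 : s ^ 2 = σ₁ / σ₂ := Real.sq_sqrt (le_of_lt (div_pos h1 h2))
  have hσ1 : σ₁ = σ₂ * s ^ 2 := by
    field_simp at hs2; linarith [hs2]
  clear_value s
  have hl1 : (1 : ℝ) < l := by linarith
  have hlm : (1 : ℝ) ≤ l - 1 := by linarith
  have hne : ∀ x : ℝ, x ≠ 1 → x - 1 ≠ 0 := fun x hx => sub_ne_zero.mpr hx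
  -- l - 1 ≤ (9 s - 1)/10
  have hls : l - 1 ≤ (9 * s - 1) / 10 := by
    rw [hlam0] at hl9; linarith
  have hsbig : 11 / 9 ≤ s := by nlinarith
  -- first derivative formula
  have hder : ∀ x : ℝ, x ≠ 1 → HasDerivAt φ (σ₂ - σ₁ / (x - 1) ^ 2) x := by
    intro x hx
    have h1' : HasDerivAt (fun y : ℝ => y * σ₁) σ₁ x := by
      simpa using (hasDerivAt_id x).mul_const σ₁
    have h2' : HasDerivAt (fun y : ℝ => y - 1) 1 x := (hasDerivAt_id x).sub_const 1
    have h3 := h1'.div h2' (hne x hx)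
    have h4 : HasDerivAt (fun y : ℝ => y * σ₂) σ₂ x := by
      simpa using (hasDerivAt_id x).mul_const σ₂
    have := h3.add h4
    rw [hφ]
    refine this.congr_deriv ?_
    have hx0 := hne x hx
    field_simp
    ring
  have hderiv1 : deriv φ l = σ₂ - σ₁ / (l - 1) ^ 2 := (hder l (by linarith)).deriv
  -- deriv φ agrees with explicit function near l
  have hEq : deriv φ =ᶠ[nhds l] fun x => σ₂ - σ₁ / (x - 1) ^ 2 := by
    have hop : IsOpen {x : ℝ | x ≠ 1} := isOpen_ne
    filter_upwards [hop.mem_nhds (show l ≠ 1 by intro h; rw [h] at hl1; linarith)] with x hx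
    exact (hder x hx).deriv
  have hder2 : HasDerivAt (fun x : ℝ => σ₂ - σ₁ / (x - 1) ^ 2) (2 * σ₁ / (l - 1) ^ 3) l := by
    have hpow : HasDerivAt (fun y : ℝ => (y - 1) ^ 2) (2 * (l - 1)) l := by
      have := ((hasDerivAt_id l).sub_const 1).pow 2
      simp at this; exact this
    have h3 := (hasDerivAt_const l σ₁).div hpow (pow_ne_zero 2 (hne l (by linarith)))
    have := (hasDerivAt_const l σ₂).sub h3
    refine this.congr_deriv ?_
    have hl0 : l - 1 ≠ 0 := hne l (by linarith)
    field_simp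
    ring
  have hderiv2 : deriv (deriv φ) l = 2 * σ₁ / (l - 1) ^ 3 := by
    rw [Filter.EventuallyEq.deriv_eq hEq]
    exact hder2.deriv
  -- abbreviations
  have hA : deriv φ l = σ₂ * ((l - 1) ^ 2 - s ^ 2) / (l - 1) ^ 2 := by
    rw [hderiv1, hσ1]
    have hl0 : l - 1 ≠ 0 := hne l (by linarith)
    field_simp
  have hkey : l - 1 < s := by nlinarith
  have hAneg : deriv φ l < 0 := by
    rw [hA]
    apply div_neg_of_neg_of_pos
    · have : (l-1)^2 - s^2 < 0 := by nlinarith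
      nlinarith
    · positivity
  have habsA : |deriv φ l| = σ₂ * (s ^ 2 - (l - 1) ^ 2) / (l - 1) ^ 2 := by
    rw [abs_of_neg hAneg, hA]; ring
  have hlam0' : lam0 = 1 + s := hlam0
  constructor
  · rw [habsA, hlam0', div_le_div_iff₀ (by positivity) (by positivity)]
    nlinarith [sq_nonneg (l - 1), mul_pos h2 hs0, sq_nonneg s,
      mul_le_mul_of_nonneg_left hls (le_of_lt h2),
      mul_nonneg (mul_nonneg h2.le hs0.le) (by linarith : (0:ℝ) ≤ l - 1)]
  · have hApos : (0:ℝ) < σ₂ * (s ^ 2 - (l - 1) ^ 2) / (l - 1) ^ 2 := by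
      have : (0:ℝ) < s ^ 2 - (l - 1) ^ 2 := by nlinarith
      positivity
    rw [hderiv2, abs_div, habsA, hσ1]
    have hBpos : (0:ℝ) < 2 * (σ₂ * s ^ 2) / (l - 1) ^ 3 := by positivity
    rw [abs_of_pos hBpos, div_le_div_iff₀ (by positivity) (by linarith : (0:ℝ) < l - 1)]
    rw [div_mul_eq_mul_div, div_le_iff₀ (by positivity : (0:ℝ) < (l-1)^3)]
    have hrhs : 22 * (σ₂ * (s ^ 2 - (l - 1) ^ 2) / (l - 1) ^ 2) * (l - 1) ^ 3
        = 22 * σ₂ * (s ^ 2 - (l - 1) ^ 2) * (l - 1) := by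
      field_simp
    rw [hrhs]
    have hkey2 : 11 * (l - 1) ^ 2 ≤ 10 * s ^ 2 := by
      nlinarith [mul_self_le_mul_self (by linarith : (0:ℝ) ≤ l - 1) hls]
    nlinarith [mul_pos h2 (show (0:ℝ) < l - 1 by linarith), hkey2,
      mul_nonneg (mul_nonneg h2.le (by linarith : (0:ℝ) ≤ l - 1))
        (by nlinarith : (0:ℝ) ≤ 20 * s ^ 2 - 22 * (l - 1) ^ 2)]
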